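/- For every positive integer n and every complex number e not in {n, n−1, ..., 1} (so that all denominators are nonzero), ∑_{k=1}^n (e)_k (−n)_k / (k · (1)_k · (e−n)_k) = H_n(−e) − H_n, where H_n(x) = ∑_{i=1}^n 1/(x+i) and H_n = ∑_{i=1}^n 1/i. -/
import Mathlib

noncomputable def cpoch (x : ℂ) (k : ℕ) : ℂ := ∏ i ∈ Finset.range k, (x + i)

noncomputable def Hc (n : ℕ) (x : ℂ) : ℂ := ∑ i ∈ Finset.range n, 1 / (x + (i + 1))

lemma cpoch_zero (x : ℂ) : cpoch x 0 = 1 := rfl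

lemma cpoch_succ (x : ℂ) (k : ℕ) : cpoch x (k+1) = cpoch x k * (x + k) :=
  Finset.prod_range_succ _ _

lemma cpoch_succ' (x : ℂ) (k : ℕ) : cpoch x (k+1) = x * cpoch (x+1) k := by
  unfold cpoch
  rw [Finset.prod_range_succ']
  push_cast
  rw [add_zero, mul_comm]
  congr 1
  exact Finset.prod_congr rfl fun i _ => by ring

lemma cpoch_one (x : ℂ) : cpoch x 1 = x := by
  have h := cpoch_succ x 0
  simpa [cpoch_zero] using h

lemma cpoch_one_ne (k : ℕ) : cpoch 1 k ≠ 0 := by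
  unfold cpoch
  refine Finset.prod_ne_zero_iff.mpr fun i _ => ?_
  have h : ((1:ℂ) + i) = ((i+1 : ℕ) : ℂ) := by push_cast; ring
  rw [h]
  exact_mod_cast Nat.succ_ne_zero i

lemma key_ne (n : ℕ) (e : ℂ) (he0 : e ≠ 0) (he : ∀ m ∈ Finset.Icc 1 n, e ≠ m) :
    ∀ i ≤ n, e - n + i ≠ 0 := by
  intro i hi h
  have hei : e = ((n - i : ℕ) : ℂ) := by
    rw [Nat.cast_sub hi]; linear_combination h
  rcases Nat.eq_zero_or_pos (n - i) with h0 | h0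
  · rw [h0] at hei; exact he0 (by simpa using hei)
  · exact he (n - i) (Finset.mem_Icc.mpr ⟨h0, Nat.sub_le _ _⟩) hei

lemma cpoch_sub_ne (n : ℕ) (e : ℂ) (he0 : e ≠ 0) (he : ∀ m ∈ Finset.Icc 1 n, e ≠ m) :
    ∀ j, j ≤ n + 1 → cpoch (e - n) j ≠ 0 := by
  intro j hj
  unfold cpoch
  refine Finset.prod_ne_zero_iff.mpr fun i hi => ?_
  have : i < j := Finset.mem_range.mp hi
  exact key_ne n e he0 he i (by omega)

noncomputable def Dd (n : ℕ) (e : ℂ) (j : ℕ) : ℂ :=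
  cpoch e (j+1) * cpoch (-(n:ℂ)) j / (cpoch 1 (j+1) * cpoch (e - n) (j+1))

set_option maxHeartbeats 1600000 in
lemma sumD (n : ℕ) (e : ℂ) (he0 : e ≠ 0) (he : ∀ m ∈ Finset.Icc 1 n, e ≠ m) :
    ∀ j ≤ n, ∑ i ∈ Finset.range (j+1), Dd n e i
      = 1/((n:ℂ)+1) + ((n:ℂ) - j) * ((j:ℂ)+1+e) * Dd n e j / (((n:ℂ)+1) * e) := by
  have hn1 : ((n:ℂ)+1) ≠ 0 := Nat.cast_add_one_ne_zero n
  intro j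
  induction j with
  | zero =>
    intro _
    have hen : e - (n:ℂ) ≠ 0 := by simpa using key_ne n e he0 he 0 (Nat.zero_le n)
    have hD0 : Dd n e 0 = e / (e - (n:ℂ)) := by
      show cpoch e (0+1) * cpoch (-(n:ℂ)) 0 / (cpoch 1 (0+1) * cpoch (e - n) (0+1)) = _
      simp [cpoch_zero, cpoch_one]
    rw [Finset.sum_range_one, hD0]
    push_cast
    field_simp
    ring
  | succ j ih =>
    intro hj
    have hj' : j ≤ n := by omega
    have hCj : cpoch 1 j ≠ 0 := cpoch_one_ne _
    have hPj : cpoch (e - (n:ℂ)) j ≠ 0 := cpoch_sub_ne n e he0 he j (by omega)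
    have h1j : (1:ℂ) + (j:ℂ) ≠ 0 := by
      intro h; exact Nat.cast_add_one_ne_zero (R := ℂ) j (by linear_combination h)
    have h1j' : (1:ℂ) + ((j:ℂ) + 1) ≠ 0 := by
      intro h
      have : ((j:ℂ) + 2) = 0 := by linear_combination h
      have h2 : (((j+2 : ℕ)) : ℂ) = 0 := by push_cast; linear_combination this
      exact Nat.succ_ne_zero (j+1) (by exact_mod_cast h2)
    have hfj : e - (n:ℂ) + (j:ℂ) ≠ 0 := key_ne n e he0 he j hj'
    have hfj' : e - (n:ℂ) + ((j:ℂ) + 1) ≠ 0 := by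
      intro h
      exact key_ne n e he0 he (j+1) hj (by push_cast; linear_combination h)
    have hC : cpoch 1 (j+1) ≠ 0 := cpoch_one_ne _
    have hP : cpoch (e - (n:ℂ)) (j+1) ≠ 0 := cpoch_sub_ne n e he0 he (j+1) (by omega)
    rw [Finset.sum_range_succ, ih hj']
    simp only [Dd]
    rw [cpoch_succ e (j+1), cpoch_succ (-(n:ℂ)) j, cpoch_succ 1 (j+1),
      cpoch_succ (e - (n:ℂ)) (j+1)]
    set A := cpoch e (j+1) with hA
    set B := cpoch (-(n:ℂ)) j with hB
    set C' := cpoch 1 (j+1) with hC'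
    set P' := cpoch (e - (n:ℂ)) (j+1) with hP'
    push_cast
    rw [add_assoc]
    congr 1
    field_simp
    ring

lemma sumD_top (n : ℕ) (e : ℂ) (he0 : e ≠ 0) (he : ∀ m ∈ Finset.Icc 1 n, e ≠ m) :
    ∑ i ∈ Finset.range (n+1), Dd n e i = 1/((n:ℂ)+1) := by
  rw [sumD n e he0 he n le_rfl]
  simp

set_option maxHeartbeats 1600000 in
lemma step_term (n : ℕ) (e : ℂ) (he0 : e ≠ 0)
    (he : ∀ m ∈ Finset.Icc 1 (n+1), e ≠ m) :
    ∀ j ≤ n,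
      cpoch e (j+1) * cpoch (-((n:ℂ)+1)) (j+1)
          / (((j:ℂ)+1) * cpoch 1 (j+1) * cpoch (e - ((n:ℂ)+1)) (j+1))
      = cpoch e (j+1) * cpoch (-(n:ℂ)) (j+1)
          / (((j:ℂ)+1) * cpoch 1 (j+1) * cpoch (e - (n:ℂ)) (j+1))
        + e / (((n:ℂ)+1) - e) * Dd n e j := by
  intro j hj
  have he' : ∀ m ∈ Finset.Icc 1 n, e ≠ m := by
    intro m hm
    have h := Finset.mem_Icc.mp hm
    exact he m (Finset.mem_Icc.mpr ⟨h.1, by omega⟩)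
  have hCj : cpoch 1 j ≠ 0 := cpoch_one_ne _
  have hPj : cpoch (e - (n:ℂ)) j ≠ 0 := cpoch_sub_ne n e he0 he' j (by omega)
  have hfj : e - (n:ℂ) + (j:ℂ) ≠ 0 := key_ne n e he0 he' j hj
  have hn1e : e - ((n:ℂ)+1) ≠ 0 := by
    have h := he (n+1) (Finset.mem_Icc.mpr ⟨by omega, le_rfl⟩)
    intro hh
    exact h (by push_cast; linear_combination hh)
  have hn1e' : ((n:ℂ)+1) - e ≠ 0 := fun h => hn1e (by linear_combination -h)
  have hj1 : ((j:ℂ)+1) ≠ 0 := Nat.cast_add_one_ne_zero j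
  have h1j : (1:ℂ) + (j:ℂ) ≠ 0 := by
    intro h; exact hj1 (by linear_combination h)
  have h1 : cpoch (-((n:ℂ)+1)) (j+1) = (-((n:ℂ)+1)) * cpoch (-(n:ℂ)) j := by
    rw [cpoch_succ']; ring_nf
  have h2 : cpoch (e - ((n:ℂ)+1)) (j+1) = (e - ((n:ℂ)+1)) * cpoch (e - (n:ℂ)) j := by
    rw [cpoch_succ']; ring_nf
  have hC : cpoch 1 (j+1) ≠ 0 := cpoch_one_ne _
  simp only [Dd]
  rw [h1, h2, cpoch_succ (-(n:ℂ)) j, cpoch_succ (e - (n:ℂ)) j]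
  set A := cpoch e (j+1) with hA
  set B := cpoch (-(n:ℂ)) j with hB
  set C' := cpoch 1 (j+1) with hC'
  set P' := cpoch (e - (n:ℂ)) j with hP'
  have d1 : (((j:ℂ) + 1) * C' * (P' * (e - (n:ℂ) + j))) ≠ 0 :=
    mul_ne_zero (mul_ne_zero hj1 hC) (mul_ne_zero hPj hfj)
  have d2 : (((n:ℂ) + 1 - e) * (C' * (P' * (e - (n:ℂ) + j)))) ≠ 0 :=
    mul_ne_zero hn1e' (mul_ne_zero hC (mul_ne_zero hPj hfj))
  have d3 : (((j:ℂ) + 1) * C' * ((e - ((n:ℂ) + 1)) * P')) ≠ 0 :=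
    mul_ne_zero (mul_ne_zero hj1 hC) (mul_ne_zero hn1e hPj)
  rw [div_mul_div_comm, div_add_div _ _ d1 d2,
    div_eq_div_iff d3 (mul_ne_zero d1 d2)]
  ring

lemma aux11 : ∀ (n : ℕ) (e : ℂ), (∀ j ∈ Finset.Icc 1 n, e ≠ (j : ℂ)) →
    ∑ k ∈ Finset.Icc 1 n,
      cpoch e k * cpoch (-(n : ℂ)) k / ((k : ℂ) * cpoch 1 k * cpoch (e - n) k)
    = Hc n (-e) - Hc n 0 := by
  have reidx : ∀ (f : ℕ → ℂ) (m : ℕ),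
      ∑ k ∈ Finset.Icc 1 m, f k = ∑ j ∈ Finset.range m, f (j+1) := by
    intro f m
    induction m with
    | zero => simp
    | succ m ihm =>
      rw [Finset.sum_Icc_succ_top (by omega), ihm, Finset.sum_range_succ]
  intro n
  induction n with
  | zero => intro e he; simp [Hc]
  | succ n ih =>
    intro e he
    have he' : ∀ m ∈ Finset.Icc 1 n, e ≠ m := by
      intro m hm
      have h := Finset.mem_Icc.mp hm
      exact he m (Finset.mem_Icc.mpr ⟨h.1, by omega⟩)
    by_cases h0 : e = 0
    · subst h0
      have hz : ∑ k ∈ Finset.Icc 1 (n+1),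
          cpoch 0 k * cpoch (-((n+1 : ℕ) : ℂ)) k
            / ((k : ℂ) * cpoch 1 k * cpoch (0 - ((n+1 : ℕ) : ℂ)) k) = 0 := by
        refine Finset.sum_eq_zero fun k hk => ?_
        have hk1 : k ≠ 0 := by
          have := (Finset.mem_Icc.mp hk).1; omega
        obtain ⟨m, rfl⟩ := Nat.exists_eq_succ_of_ne_zero hk1
        rw [cpoch_succ']
        simp
      rw [hz]
      simp
    · have hn1e : e - ((n:ℂ)+1) ≠ 0 := by
        have h := he (n+1) (Finset.mem_Icc.mpr ⟨by omega, le_rfl⟩)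
        intro hh
        exact h (by push_cast; linear_combination hh)
      have hn1e' : ((n:ℂ)+1) - e ≠ 0 := fun h => hn1e (by linear_combination -h)
      have hn1e'' : -e + ((n:ℂ)+1) ≠ 0 := fun h => hn1e (by linear_combination -h)
      have hn1 : ((n:ℂ)+1) ≠ 0 := Nat.cast_add_one_ne_zero n
      have hlast : cpoch (-(n:ℂ)) (n+1) = 0 := by
        rw [cpoch_succ]; simp
      calc ∑ k ∈ Finset.Icc 1 (n+1),
              cpoch e k * cpoch (-((n+1 : ℕ) : ℂ)) k
                / ((k : ℂ) * cpoch 1 k * cpoch (e - ((n+1 : ℕ) : ℂ)) k)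
          = ∑ j ∈ Finset.range (n+1),
              cpoch e (j+1) * cpoch (-((n+1 : ℕ) : ℂ)) (j+1)
                / (((j+1 : ℕ) : ℂ) * cpoch 1 (j+1) * cpoch (e - ((n+1 : ℕ) : ℂ)) (j+1)) :=
            reidx _ _
        _ = ∑ j ∈ Finset.range (n+1),
              (cpoch e (j+1) * cpoch (-(n:ℂ)) (j+1)
                / (((j+1 : ℕ) : ℂ) * cpoch 1 (j+1) * cpoch (e - (n:ℂ)) (j+1))
               + e / (((n:ℂ)+1) - e) * Dd n e j) := by
            refine Finset.sum_congr rfl fun j hj => ?_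
            have hjn : j ≤ n := by have := Finset.mem_range.mp hj; omega
            have hst := step_term n e h0 he j hjn
            push_cast
            exact hst
        _ = (∑ j ∈ Finset.range (n+1),
              cpoch e (j+1) * cpoch (-(n:ℂ)) (j+1)
                / (((j+1 : ℕ) : ℂ) * cpoch 1 (j+1) * cpoch (e - (n:ℂ)) (j+1)))
            + e / (((n:ℂ)+1) - e) * ∑ j ∈ Finset.range (n+1), Dd n e j := by
            rw [Finset.sum_add_distrib, Finset.mul_sum]
        _ = (∑ j ∈ Finset.range n,
              cpoch e (j+1) * cpoch (-(n:ℂ)) (j+1)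
                / (((j+1 : ℕ) : ℂ) * cpoch 1 (j+1) * cpoch (e - (n:ℂ)) (j+1)))
            + e / (((n:ℂ)+1) - e) * (1/((n:ℂ)+1)) := by
            rw [Finset.sum_range_succ, sumD_top n e h0 he', hlast,
              mul_zero, zero_div, add_zero]
        _ = (∑ k ∈ Finset.Icc 1 n,
              cpoch e k * cpoch (-(n:ℂ)) k / ((k : ℂ) * cpoch 1 k * cpoch (e - (n:ℂ)) k))
            + e / (((n:ℂ)+1) - e) * (1/((n:ℂ)+1)) := by
            rw [reidx (fun k => cpoch e k * cpoch (-(n:ℂ)) k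
              / ((k : ℂ) * cpoch 1 k * cpoch (e - (n:ℂ)) k)) n]
        _ = (Hc n (-e) - Hc n 0) + e / (((n:ℂ)+1) - e) * (1/((n:ℂ)+1)) := by
            rw [ih e he']
        _ = Hc (n+1) (-e) - Hc (n+1) 0 := by
            have harith : e / (((n:ℂ)+1) - e) * (1/((n:ℂ)+1))
                = 1/(-e + ((n:ℂ)+1)) - 1/((0:ℂ) + ((n:ℂ)+1)) := by
              have hz : ((0:ℂ) + ((n:ℂ)+1)) ≠ 0 := by rw [zero_add]; exact hn1
              rw [div_mul_div_comm, div_sub_div _ _ hn1e'' hz,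
                div_eq_div_iff (mul_ne_zero hn1e' hn1) (mul_ne_zero hn1e'' hz)]
              ring
            simp only [Hc, Finset.sum_range_succ]
            push_cast
            linear_combination harith

theorem stmt11 (n : ℕ) (hn : 0 < n) (e : ℂ)
    (he : ∀ j ∈ Finset.Icc 1 n, e ≠ (j : ℂ)) :
    ∑ k ∈ Finset.Icc 1 n,
      cpoch e k * cpoch (-(n : ℂ)) k / ((k : ℂ) * cpoch 1 k * cpoch (e - n) k)
    = Hc n (-e) - Hc n 0 := aux11 n e he
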